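/- Let p : E → S¹ be a Hurewicz fibration onto the unit circle S¹ ⊆ ℂ, with E nonempty. If the fiber F = p⁻¹(1) is path-connected, then p admits a continuous (global) cross-section: there exists a continuous map s : S¹ → E with p ∘ s = id. -/

import Mathlib

open Topology unitInterval

/-- Two maps `f g : A → B` are (freely) homotopic. -/
def MapsHomotopic {A B : Type*} [TopologicalSpace A] [TopologicalSpace B]
    (f g : A → B) : Prop :=
  ∃ H : A × unitInterval → B, Continuous H ∧ (∀ a, H (a, 0) = f a) ∧ (∀ a, H (a, 1) = g a)

/-- A continuous local section of `q` over the subset `U`. -/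
def HasLocalSection {E B : Type*} [TopologicalSpace E] [TopologicalSpace B]
    (q : E → B) (U : Set B) : Prop :=
  ∃ s : U → E, Continuous s ∧ ∀ u : U, q (s u) = (u : B)

/-- The sectional number `sec_op(q)`: the least `n` such that `B` is covered by `n`
open sets each admitting a continuous local section of `q`. -/
noncomputable def secOp {E B : Type*} [TopologicalSpace E] [TopologicalSpace B]
    (q : E → B) : ℕ∞ :=
  sInf ((fun n : ℕ => (n : ℕ∞)) '' {n : ℕ | ∃ U : Fin n → Set B,
    (∀ i, IsOpen (U i)) ∧ (⋃ i, U i) = Set.univ ∧ ∀ i, HasLocalSection q (U i)})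

/-- A homotopy local section of `q` over `U`: a continuous `s : U → E` with `q ∘ s`
homotopic to the inclusion. -/
def HasHtpyLocalSection {E B : Type*} [TopologicalSpace E] [TopologicalSpace B]
    (q : E → B) (U : Set B) : Prop :=
  ∃ s : U → E, Continuous s ∧ MapsHomotopic (fun u => q (s u)) (fun u : U => (u : B))

/-- The Schwarz genus of `q`. -/
noncomputable def schwarzGenus {E B : Type*} [TopologicalSpace E] [TopologicalSpace B]
    (q : E → B) : ℕ∞ :=
  sInf ((fun n : ℕ => (n : ℕ∞)) '' {n : ℕ | ∃ U : Fin n → Set B,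
    (∀ i, IsOpen (U i)) ∧ (⋃ i, U i) = Set.univ ∧ ∀ i, HasHtpyLocalSection q (U i)})

/-- Hurewicz fibration: homotopy lifting property with respect to all topological spaces. -/
def IsHurewiczFibration {E B : Type*} [TopologicalSpace E] [TopologicalSpace B]
    (p : E → B) : Prop :=
  ∀ (X : Type*) [TopologicalSpace X] (h : X → E) (H : X × unitInterval → B),
    Continuous h → Continuous H → (∀ x, H (x, 0) = p (h x)) →
      ∃ H' : X × unitInterval → E, Continuous H' ∧ (∀ y, p (H' y) = H y) ∧
        ∀ x, H' (x, 0) = h x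

/-- The topological complexity of a map `q : Y → Z`: the least `n` such that `Y × Z`
is covered by `n` open sets each admitting a continuous local section of
`e_q : PY → Y × Z`, `γ ↦ (γ(0), q(γ(1)))`. -/
noncomputable def topComplexity {Y Z : Type*} [TopologicalSpace Y] [TopologicalSpace Z]
    (q : Y → Z) : ℕ∞ :=
  sInf ((fun n : ℕ => (n : ℕ∞)) '' {n : ℕ | ∃ U : Fin n → Set (Y × Z),
    (∀ i, IsOpen (U i)) ∧ (⋃ i, U i) = Set.univ ∧
    ∀ i, ∃ s : U i → C(unitInterval, Y), Continuous s ∧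
      ∀ u : U i, ((s u) 0, q ((s u) 1)) = (u : Y × Z)})

lemma myCircMem (x : ℝ) : Complex.exp ((x : ℂ) * Complex.I) ∈ Metric.sphere (0 : ℂ) 1 := by
  rw [mem_sphere_zero_iff_norm, Complex.norm_exp_ofReal_mul_I]

lemma mySq {z : ℂ} (hz : z ∈ Metric.sphere (0 : ℂ) 1) : z.re ^ 2 + z.im ^ 2 = 1 := by
  rw [mem_sphere_zero_iff_norm] at hz
  have h := Complex.sq_norm z
  rw [hz, Complex.normSq_apply] at h
  nlinarith

lemma myExpArccos {z : ℂ} (hz : z ∈ Metric.sphere (0 : ℂ) 1) (him : 0 ≤ z.im) :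
    Complex.exp ((Real.arccos z.re : ℂ) * Complex.I) = z := by
  have h := mySq hz
  have h1 : -1 ≤ z.re := by nlinarith
  have h2 : z.re ≤ 1 := by nlinarith
  apply Complex.ext
  · rw [Complex.exp_ofReal_mul_I_re, Real.cos_arccos h1 h2]
  · rw [Complex.exp_ofReal_mul_I_im, Real.sin_arccos]
    have : (1 : ℝ) - z.re ^ 2 = z.im ^ 2 := by linarith
    rw [this, Real.sqrt_sq him]

lemma myExpArccosNeg {z : ℂ} (hz : z ∈ Metric.sphere (0 : ℂ) 1) (him : z.im ≤ 0) :
    Complex.exp (((-Real.arccos z.re : ℝ) : ℂ) * Complex.I) = z := by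
  have h := mySq hz
  have h1 : -1 ≤ z.re := by nlinarith
  have h2 : z.re ≤ 1 := by nlinarith
  apply Complex.ext
  · rw [Complex.exp_ofReal_mul_I_re, Real.cos_neg, Real.cos_arccos h1 h2]
  · rw [Complex.exp_ofReal_mul_I_im, Real.sin_neg, Real.sin_arccos]
    have : (1 : ℝ) - z.re ^ 2 = z.im ^ 2 := by linarith
    rw [this, Real.sqrt_sq_eq_abs, abs_of_nonpos him]
    ring

lemma myAmem (z : Metric.sphere (0 : ℂ) 1) :
    Real.arccos (z : ℂ).re / Real.pi ∈ Set.Icc (0:ℝ) 1 := by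
  constructor
  · exact div_nonneg (Real.arccos_nonneg _) Real.pi_pos.le
  · rw [div_le_one Real.pi_pos]
    exact Real.arccos_le_pi _

lemma myReCases {z : ℂ} (hz : z ∈ Metric.sphere (0 : ℂ) 1) (him : z.im = 0) :
    z.re = 1 ∨ z.re = -1 := by
  have h := mySq hz
  rw [him] at h
  have : (z.re - 1) * (z.re + 1) = 0 := by nlinarith
  rcases mul_eq_zero.1 this with h' | h'
  · left; linarith
  · right; linarith

/-- a Hurewicz fibration over the circle with nonempty total space and
path-connected fiber over `1` admits a continuous global cross-section. -/
theorem stmt5 {E : Type*} [TopologicalSpace E] [Nonempty E]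
    (p : E → Metric.sphere (0 : ℂ) 1)
    (hp : Continuous p) (hfib : IsHurewiczFibration p)
    (hF : IsPathConnected (p ⁻¹' {(⟨1, by simp⟩ : Metric.sphere (0 : ℂ) 1)})) :
    ∃ s : Metric.sphere (0 : ℂ) 1 → E, Continuous s ∧ ∀ x, p (s x) = x := by
    classical
  set one : Metric.sphere (0 : ℂ) 1 := ⟨1, by simp⟩ with hone
  obtain ⟨e₀, he₀, hjoin⟩ := hF
  have hpe₀ : p e₀ = one := he₀
  -- lift the loop t ↦ exp(2πit)
  set Hloop : PUnit × unitInterval → Metric.sphere (0 : ℂ) 1 :=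
    fun x => ⟨Complex.exp (((2 * Real.pi * (x.2 : ℝ) : ℝ) : ℂ) * Complex.I), myCircMem _⟩
    with hHloop
  have hHloopc : Continuous Hloop := by
    apply Continuous.subtype_mk
    exact Complex.continuous_exp.comp
      ((Complex.continuous_ofReal.comp
        ((continuous_const.mul (continuous_induced_dom.comp continuous_snd)))).mul
        continuous_const)
  have hHloop0 : ∀ x : PUnit, Hloop (x, 0) = p e₀ := by
    intro x
    rw [hpe₀]
    apply Subtype.ext
    simp [hHloop, hone]
  obtain ⟨L, hLc, hLp, hL0⟩ := hfib PUnit (fun _ => e₀) Hloop continuous_const hHloopc hHloop0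
  set v : unitInterval → E := fun t => L (PUnit.unit, t) with hv
  have hvp : ∀ t, p (v t) = ⟨Complex.exp (((2 * Real.pi * (t : ℝ) : ℝ) : ℂ) * Complex.I),
      myCircMem _⟩ := fun t => hLp _
  have hv0 : v 0 = e₀ := hL0 _
  set e₁ : E := v 1 with he₁def
  have he₁mem : e₁ ∈ p ⁻¹' {one} := by
    have h := hvp 1
    simp only [Set.mem_preimage, Set.mem_singleton_iff, he₁def, h]
    apply Subtype.ext
    have : ((2 * Real.pi * ((1 : unitInterval) : ℝ) : ℝ) : ℂ) * Complex.I
        = 2 * Real.pi * Complex.I := by push_cast; ring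
    simp only [this, Complex.exp_two_pi_mul_I, hone]
  obtain ⟨γ, hγ⟩ := (hjoin he₁mem).symm
  set A : Metric.sphere (0 : ℂ) 1 → unitInterval :=
    fun z => ⟨Real.arccos (z : ℂ).re / Real.pi, myAmem z⟩ with hA
  have hAc : Continuous A :=
    Continuous.subtype_mk ((Real.continuous_arccos.comp
      (Complex.continuous_re.comp continuous_subtype_val)).div_const _) _
  have hA1 : ∀ z : Metric.sphere (0 : ℂ) 1, (z : ℂ).re = 1 → A z = 0 := by
    intro z h
    apply Subtype.ext
    simp [hA, h, Real.arccos_one]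
  have hAneg1 : ∀ z : Metric.sphere (0 : ℂ) 1, (z : ℂ).re = -1 → A z = 1 := by
    intro z h
    apply Subtype.ext
    simp [hA, h, Real.arccos_neg_one, div_self Real.pi_ne_zero]
  set g : Metric.sphere (0 : ℂ) 1 → E :=
    fun z => if (0 : ℝ) ≤ (z : ℂ).im then v (A z) else γ (unitInterval.symm (A z)) with hg
  have hgeq : ∀ z : Metric.sphere (0 : ℂ) 1, (0:ℝ) = (z : ℂ).im →
      v (A z) = γ (unitInterval.symm (A z)) := by
    intro z hz
    rcases myReCases z.2 hz.symm with h | h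
    · rw [hA1 z h, unitInterval.symm_zero, hv0, γ.target]
    · rw [hAneg1 z h, unitInterval.symm_one, γ.source, he₁def]
  have hgc : Continuous g := by
    apply Continuous.if_le
    · exact hLc.comp (continuous_const.prodMk hAc)
    · exact γ.continuous.comp (unitInterval.continuous_symm.comp hAc)
    · exact continuous_const
    · exact Complex.continuous_im.comp continuous_subtype_val
    · exact hgeq
  -- the homotopy H₂ from p ∘ g to the identity
  set H₂ : (Metric.sphere (0 : ℂ) 1) × unitInterval → Metric.sphere (0 : ℂ) 1 :=
    fun w => if (0 : ℝ) ≤ (w.1 : ℂ).im then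
      ⟨Complex.exp ((((2 - (w.2 : ℝ)) * Real.arccos (w.1 : ℂ).re : ℝ) : ℂ) * Complex.I),
        myCircMem _⟩
    else
      ⟨Complex.exp (((-((w.2 : ℝ) * Real.arccos (w.1 : ℂ).re) : ℝ) : ℂ) * Complex.I),
        myCircMem _⟩ with hH₂
  have hH₂c : Continuous H₂ := by
    have hrc : Continuous fun w : (Metric.sphere (0 : ℂ) 1) × unitInterval =>
        Real.arccos (w.1 : ℂ).re :=
      Real.continuous_arccos.comp
        (Complex.continuous_re.comp (continuous_subtype_val.comp continuous_fst))
    have hsc : Continuous fun w : (Metric.sphere (0 : ℂ) 1) × unitInterval => ((w.2 : ℝ)) :=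
      continuous_induced_dom.comp continuous_snd
    apply Continuous.if_le
    · exact Continuous.subtype_mk (Complex.continuous_exp.comp
        ((Complex.continuous_ofReal.comp (((continuous_const.sub hsc)).mul hrc)).mul
          continuous_const)) _
    · exact Continuous.subtype_mk (Complex.continuous_exp.comp
        ((Complex.continuous_ofReal.comp (((hsc.mul hrc)).neg)).mul continuous_const)) _
    · exact continuous_const
    · exact Complex.continuous_im.comp (continuous_subtype_val.comp continuous_fst)
    · intro w hw
      apply Subtype.ext
      rcases myReCases w.1.2 hw.symm with h | h
      · simp [h, Real.arccos_one]
      · rw [h, Real.arccos_neg_one]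
        show Complex.exp _ = Complex.exp _
        have : (((2 - (w.2 : ℝ)) * Real.pi : ℝ) : ℂ) * Complex.I
            = ((-((w.2 : ℝ) * Real.pi) : ℝ) : ℂ) * Complex.I + 2 * Real.pi * Complex.I := by
          push_cast; ring
        rw [this, Complex.exp_add, Complex.exp_two_pi_mul_I, mul_one]
  have hH₂0 : ∀ z, H₂ (z, 0) = p (g z) := by
    intro z
    by_cases h : (0 : ℝ) ≤ (z : ℂ).im
    · simp only [hH₂, hg, if_pos h]
      rw [hvp (A z)]
      apply Subtype.ext
      show Complex.exp _ = Complex.exp _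
      congr 1
      have : (((0 : unitInterval) : ℝ)) = 0 := rfl
      rw [this]
      norm_num
      have hpi : (Real.pi : ℂ) ≠ 0 := Complex.ofReal_ne_zero.2 Real.pi_ne_zero
      field_simp
      show _ = _ * ((Real.arccos (z : ℂ).re / Real.pi : ℝ) : ℂ)
      rw [Complex.ofReal_div, mul_div_cancel₀ _ hpi]
    · simp only [hH₂, hg, if_neg h]
      have hmem := hγ (unitInterval.symm (A z))
      have : p (γ (unitInterval.symm (A z))) = one := hmem
      rw [this]
      apply Subtype.ext
      have : ((0 : unitInterval) : ℝ) = 0 := rfl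
      simp [this, hone]
  obtain ⟨H', hH'c, hH'p, _⟩ := hfib (ULift ↥(Metric.sphere (0 : ℂ) 1))
      (fun x => g x.down) (fun w => H₂ (w.1.down, w.2))
      (hgc.comp continuous_uliftDown)
      (hH₂c.comp ((continuous_uliftDown.comp continuous_fst).prodMk continuous_snd))
      (fun x => hH₂0 x.down)
  refine ⟨fun z => H' (ULift.up z, 1),
    hH'c.comp (continuous_uliftUp.prodMk continuous_const), ?_⟩
  intro z
  rw [hH'p (ULift.up z, 1)]
  show H₂ (z, 1) = z
  by_cases h : (0 : ℝ) ≤ (z : ℂ).im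
  · simp only [hH₂, if_pos h]
    apply Subtype.ext
    have h1 : ((1 : unitInterval) : ℝ) = 1 := rfl
    show Complex.exp _ = (z : ℂ)
    rw [h1]
    norm_num
    exact myExpArccos z.2 h
  · simp only [hH₂, if_neg h]
    apply Subtype.ext
    have h1 : ((1 : unitInterval) : ℝ) = 1 := rfl
    show Complex.exp _ = (z : ℂ)
    rw [h1, one_mul]
    exact myExpArccosNeg z.2 (le_of_not_ge h)
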